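/- arXiv:1406.7607 — 4 statements merged into one kernel-verified Lean document; each statement's English description precedes it below -/
import Mathlib

section
/- If W = [W₁ W₂] is an orthogonal matrix of eigenvectors of C with corresponding eigenvalues λ₁ ≥ ⋯ ≥ λ_m, where W₁ contains the first n columns, and y = W₁^T x, z = W₂^T x, then ∫_X ‖∇_y f‖² ρ dx = λ₁ + ⋯ + λ_n and ∫_X ‖∇_z f‖² ρ dx = λ_{n+1} + ⋯ + λ_m. -/
open MeasureTheory Matrix

noncomputable def grad {m : ℕ} (f : (Fin m → ℝ) → ℝ) (x : Fin m → ℝ) : Fin m → ℝ :=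
  fun i => fderiv ℝ f x (Pi.single i 1)

/-- with `C = W Λ Wᵀ` an eigendecomposition (orthogonal `W`, ordered
eigenvalues), the mean-squared gradients with respect to the active coordinates
`y = W₁ᵀ x` (first `n` columns) and inactive coordinates `z = W₂ᵀ x` equal the
corresponding partial sums of eigenvalues. Here `(∇_y f)_k = ∑ i, W i k * (∇f)_i`
for `k < n`, and similarly for `z` with `k ≥ n`. -/
theorem stmt3 {m : ℕ} (n : ℕ) (hn : n ≤ m)
    (ρ : (Fin m → ℝ) → ℝ) (hρ : ∀ x ∈ Set.Icc (-1 : Fin m → ℝ) 1, 0 ≤ ρ x)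
    (hρ1 : ∫ x in Set.Icc (-1 : Fin m → ℝ) 1, ρ x = 1)
    (f : (Fin m → ℝ) → ℝ) (hf : ContDiff ℝ 1 f)
    (hint : ∀ i j : Fin m, IntegrableOn (fun x => grad f x i * grad f x j * ρ x)
      (Set.Icc (-1 : Fin m → ℝ) 1) volume)
    (C : Matrix (Fin m) (Fin m) ℝ)
    (hC : ∀ i j, C i j = ∫ x in Set.Icc (-1 : Fin m → ℝ) 1, grad f x i * grad f x j * ρ x)
    (W : Matrix (Fin m) (Fin m) ℝ) (hW : Wᵀ * W = 1)
    (Λ : Fin m → ℝ) (hord : Antitone Λ)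
    (hdecomp : C = W * Matrix.diagonal Λ * Wᵀ) :
    (∫ x in Set.Icc (-1 : Fin m → ℝ) 1,
        (∑ k ∈ Finset.univ.filter (fun k : Fin m => (k : ℕ) < n),
          (∑ i, W i k * grad f x i)^2) * ρ x
      = ∑ k ∈ Finset.univ.filter (fun k : Fin m => (k : ℕ) < n), Λ k) ∧
    (∫ x in Set.Icc (-1 : Fin m → ℝ) 1,
        (∑ k ∈ Finset.univ.filter (fun k : Fin m => n ≤ (k : ℕ)),
          (∑ i, W i k * grad f x i)^2) * ρ x
      = ∑ k ∈ Finset.univ.filter (fun k : Fin m => n ≤ (k : ℕ)), Λ k) := by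
  have hsq : ∀ (k : Fin m) (x : Fin m → ℝ),
      (∑ i, W i k * grad f x i)^2 * ρ x
        = ∑ i, ∑ j, (W i k * W j k) * (grad f x i * grad f x j * ρ x) := by
    intro k x
    rw [sq, Finset.sum_mul_sum, Finset.sum_mul]
    refine Finset.sum_congr rfl fun i _ => ?_
    rw [Finset.sum_mul]
    exact Finset.sum_congr rfl fun j _ => by ring
  have hint2 : ∀ k : Fin m, IntegrableOn
      (fun x => (∑ i, W i k * grad f x i)^2 * ρ x)
      (Set.Icc (-1 : Fin m → ℝ) 1) volume := by
    intro k
    have : IntegrableOn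
        (fun x => ∑ i, ∑ j, (W i k * W j k) * (grad f x i * grad f x j * ρ x))
        (Set.Icc (-1 : Fin m → ℝ) 1) volume := by
      apply integrable_finset_sum
      intro i _
      apply integrable_finset_sum
      intro j _
      exact (hint i j).const_mul _
    exact this.congr_fun (fun x _ => (hsq k x).symm) measurableSet_Icc
  have hWW : W * Wᵀ = 1 := by
    rw [mul_eq_one_comm] at hW; exact hW
  have hΛ : Wᵀ * C * W = Matrix.diagonal Λ := by
    rw [hdecomp]
    calc Wᵀ * (W * Matrix.diagonal Λ * Wᵀ) * W
        = (Wᵀ * W) * Matrix.diagonal Λ * (Wᵀ * W) := by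
          simp only [Matrix.mul_assoc]
      _ = Matrix.diagonal Λ := by rw [hW]; simp
  have key : ∀ k : Fin m,
      ∫ x in Set.Icc (-1 : Fin m → ℝ) 1, (∑ i, W i k * grad f x i)^2 * ρ x = Λ k := by
    intro k
    have h1 : ∫ x in Set.Icc (-1 : Fin m → ℝ) 1, (∑ i, W i k * grad f x i)^2 * ρ x
        = ∑ i, ∑ j, (W i k * W j k) * C i j := by
      rw [MeasureTheory.integral_congr_ae (Filter.Eventually.of_forall (fun x => hsq k x))]
      rw [MeasureTheory.integral_finset_sum]
      · refine Finset.sum_congr rfl fun i _ => ?_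
        rw [MeasureTheory.integral_finset_sum]
        · refine Finset.sum_congr rfl fun j _ => ?_
          rw [MeasureTheory.integral_const_mul, hC]
        · intro j _
          exact (hint i j).const_mul _
      · intro i _
        apply integrable_finset_sum
        intro j _
        exact (hint i j).const_mul _
    rw [h1]
    have h2 : (Wᵀ * C * W) k k = ∑ i, ∑ j, (W i k * W j k) * C i j := by
      simp only [Matrix.mul_apply, Matrix.transpose_apply, Finset.sum_mul]
      rw [Finset.sum_comm]
      refine Finset.sum_congr rfl fun i _ => ?_
      refine Finset.sum_congr rfl fun j _ => ?_
      ring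
    rw [← h2, hΛ, Matrix.diagonal_apply_eq]
  have main : ∀ S : Finset (Fin m),
      ∫ x in Set.Icc (-1 : Fin m → ℝ) 1,
        (∑ k ∈ S, (∑ i, W i k * grad f x i)^2) * ρ x = ∑ k ∈ S, Λ k := by
    intro S
    have : ∀ x, (∑ k ∈ S, (∑ i, W i k * grad f x i)^2) * ρ x
        = ∑ k ∈ S, (∑ i, W i k * grad f x i)^2 * ρ x := fun x => Finset.sum_mul ..
    rw [MeasureTheory.integral_congr_ae (Filter.Eventually.of_forall this)]
    rw [MeasureTheory.integral_finset_sum _ (fun k _ => hint2 k)]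
    exact Finset.sum_congr rfl fun k _ => key k
  exact ⟨main _, main _⟩
end

section
/- If w is a unit eigenvector of C with eigenvalue 0, and ρ is continuous and strictly positive on X, then (∇f(x))^T w = 0 for all x in X; consequently, if X is convex, f is constant along the direction w, i.e., f(x + tw) = f(x) whenever x and x + tw both lie in X. -/
open MeasureTheory Matrix

set_option maxHeartbeats 1000000 in
/-- if `w` is a unit eigenvector of `C` with eigenvalue `0` and `ρ` is
continuous and strictly positive on the convex compact set `X` (with nonempty
interior), then `(∇f(x))ᵀ w = 0` on `X`, and `f` is constant along the direction
`w` inside `X`. -/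
theorem stmt5 {m : ℕ} (X : Set (Fin m → ℝ)) (hX : IsCompact X) (hconv : Convex ℝ X)
    (hint_ne : (interior X).Nonempty)
    (ρ : (Fin m → ℝ) → ℝ) (hρpos : ∀ x ∈ X, 0 < ρ x) (hρc : ContinuousOn ρ X)
    (f : (Fin m → ℝ) → ℝ) (hf : ContDiff ℝ 1 f)
    (C : Matrix (Fin m) (Fin m) ℝ)
    (hC : ∀ i j, C i j = ∫ x in X, grad f x i * grad f x j * ρ x)
    (w : Fin m → ℝ) (hw : ∑ i, (w i)^2 = 1)
    (heig : C.mulVec w = 0) :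
    (∀ x ∈ X, ∑ i, grad f x i * w i = 0) ∧
    (∀ x : Fin m → ℝ, ∀ t : ℝ, x ∈ X → x + t • w ∈ X → f (x + t • w) = f x) := by
  have hXm : MeasurableSet X := hX.measurableSet
  set g : (Fin m → ℝ) → ℝ := fun x => fderiv ℝ f x w with hg
  have hfd : Differentiable ℝ f := hf.differentiable one_ne_zero
  -- the sum equals the directional derivative
  have hgsum : ∀ x, ∑ i, grad f x i * w i = g x := by
    have key : ∀ (L : (Fin m → ℝ) →L[ℝ] ℝ) (v : Fin m → ℝ),
        L v = ∑ i, v i * L (Pi.single i 1) := by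
      intro L v
      have hv : v = ∑ i, v i • (Pi.single i (1:ℝ) : Fin m → ℝ) := by
        funext j
        simp [Finset.sum_apply, Pi.single_apply]
      conv_lhs => rw [hv]
      rw [map_sum]
      exact Finset.sum_congr rfl fun i _ => by rw [L.map_smul]; rfl
    intro x
    show ∑ i, grad f x i * w i = fderiv ℝ f x w
    rw [key (fderiv ℝ f x) w]
    exact Finset.sum_congr rfl fun i _ => mul_comm _ _
  -- continuity of g and of the gradient components
  have hfderivc : Continuous fun x => fderiv ℝ f x := hf.continuous_fderiv one_ne_zero
  have hgc : Continuous g := hfderivc.clm_apply continuous_const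
  have hgradc : ∀ i, Continuous fun x => grad f x i := fun i =>
    hfderivc.clm_apply continuous_const
  -- integrability
  have hIij : ∀ i j, IntegrableOn (fun x => grad f x i * grad f x j * ρ x) X := by
    intro i j
    exact (((hgradc i).continuousOn.mul (hgradc j).continuousOn).mul hρc).integrableOn_compact hX
  -- the key integral is zero
  have key : ∫ x in X, (g x)^2 * ρ x = 0 := by
    have hpt : ∀ x, (g x)^2 * ρ x
        = ∑ i, ∑ j, w i * w j * (grad f x i * grad f x j * ρ x) := by
      intro x
      rw [← hgsum x, sq, Finset.sum_mul_sum, Finset.sum_mul]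
      exact Finset.sum_congr rfl fun i _ => by
        rw [Finset.sum_mul]; exact Finset.sum_congr rfl fun j _ => by ring
    have hint : ∫ x in X, (g x)^2 * ρ x
        = ∑ i, ∑ j, w i * w j * ∫ x in X, grad f x i * grad f x j * ρ x := by
      simp only [hpt]
      rw [integral_finset_sum _ fun i _ =>
        (integrable_finset_sum _ fun j _ => ((hIij i j).const_mul _))]
      exact Finset.sum_congr rfl fun i _ => by
        rw [integral_finset_sum _ fun j _ => ((hIij i j).const_mul _)]
        exact Finset.sum_congr rfl fun j _ => integral_const_mul _ _
    rw [hint]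
    have hrow : ∀ i, ∑ j, w i * w j * ∫ x in X, grad f x i * grad f x j * ρ x
        = w i * (C.mulVec w i) := by
      intro i
      rw [Matrix.mulVec, dotProduct, Finset.mul_sum]
      exact Finset.sum_congr rfl fun j _ => by rw [hC i j]; ring
    simp only [hrow, heig, Pi.zero_apply, mul_zero, Finset.sum_const_zero]
  -- a.e. vanishing
  have hnn : 0 ≤ᵐ[volume.restrict X] fun x => (g x)^2 * ρ x :=
    (ae_restrict_iff' hXm).2 (ae_of_all _ fun x hx =>
      mul_nonneg (sq_nonneg _) (hρpos x hx).le)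
  have hIH : IntegrableOn (fun x => (g x)^2 * ρ x) X :=
    (((hgc.pow 2).continuousOn).mul hρc).integrableOn_compact hX
  have h0 : (fun x => (g x)^2 * ρ x) =ᵐ[volume.restrict X] 0 :=
    (integral_eq_zero_iff_of_nonneg_ae hnn hIH).mp key
  have h0' : ∀ᵐ y ∂(volume.restrict X), (g y)^2 * ρ y = 0 := by
    filter_upwards [h0] with y hy using hy
  have hnull : volume.restrict X {y | ¬ ((g y)^2 * ρ y = 0)} = 0 := ae_iff.mp h0'
  -- g vanishes on the interior
  have hint0 : ∀ x ∈ interior X, g x = 0 := by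
    intro x hx
    by_contra hgx
    have hxX : x ∈ X := interior_subset hx
    have hsq : 0 < (g x)^2 := lt_of_le_of_ne (sq_nonneg _) (Ne.symm (pow_ne_zero 2 hgx))
    have hHx : (g x)^2 * ρ x ≠ 0 := ne_of_gt (mul_pos hsq (hρpos x hxX))
    have hcont : ContinuousAt (fun y => (g y)^2 * ρ y) x := by
      have h1 : ContinuousWithinAt (fun y => (g y)^2 * ρ y) X x :=
        (((hgc.pow 2).continuousOn).mul hρc) x hxX
      exact h1.continuousAt (mem_interior_iff_mem_nhds.1 hx)
    have hmem : {y | ¬ ((g y)^2 * ρ y = 0)} ∈ nhds x :=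
      hcont.preimage_mem_nhds (isOpen_ne.mem_nhds hHx)
    have hmem2 : {y | ¬ ((g y)^2 * ρ y = 0)} ∩ interior X ∈ nhds x :=
      Filter.inter_mem hmem (isOpen_interior.mem_nhds hx)
    obtain ⟨ε, hε, hball⟩ := Metric.mem_nhds_iff.1 hmem2
    have hsub : Metric.ball x ε ⊆ {y | ¬ ((g y)^2 * ρ y = 0)} ∩ X :=
      hball.trans (Set.inter_subset_inter_right _ interior_subset)
    have hball0 : volume (Metric.ball x ε) = 0 := by
      refine measure_mono_null hsub ?_
      rw [← Measure.restrict_apply' hXm]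
      exact hnull
    exact absurd hball0 (ne_of_gt (Metric.measure_ball_pos volume x hε))
  -- g vanishes on all of X by continuity and density of the interior
  have hX0 : ∀ x ∈ X, g x = 0 := by
    intro x hx
    obtain ⟨y, hy⟩ := hint_ne
    have hz : Filter.Tendsto (fun t : ℝ => (1 - t) • y + t • x)
        (nhdsWithin 1 (Set.Iio (1:ℝ))) (nhds x) := by
      have hc : Continuous fun t : ℝ => (1 - t) • y + t • x := by continuity
      have h1 := hc.tendsto 1
      simp only [sub_self, zero_smul, one_smul, zero_add] at h1
      exact h1.mono_left nhdsWithin_le_nhds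
    have hev : ∀ᶠ t in nhdsWithin 1 (Set.Iio (1:ℝ)),
        g ((1 - t) • y + t • x) = 0 := by
      filter_upwards [self_mem_nhdsWithin,
        (eventually_gt_nhds (zero_lt_one (α := ℝ))).filter_mono nhdsWithin_le_nhds] with t ht1 ht0
      have ht1' : t < 1 := ht1
      exact hint0 _ (hconv.combo_interior_closure_mem_interior hy (subset_closure hx)
        (by linarith) ht0.le (by ring))
    have h1 : Filter.Tendsto (fun t : ℝ => g ((1 - t) • y + t • x))
        (nhdsWithin 1 (Set.Iio (1:ℝ))) (nhds (g x)) := (hgc.tendsto x).comp hz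
    have h2 : Filter.Tendsto (fun t : ℝ => g ((1 - t) • y + t • x))
        (nhdsWithin 1 (Set.Iio (1:ℝ))) (nhds 0) := by
      refine Filter.Tendsto.congr' ?_ tendsto_const_nhds
      filter_upwards [hev] with t ht using ht.symm
    exact tendsto_nhds_unique h1 h2
  refine ⟨fun x hx => (hgsum x).trans (hX0 x hx), ?_⟩
  -- part 2: constancy along w
  intro x t hx hxt
  rcases eq_or_ne t 0 with rfl | ht
  · simp
  have hφd : ∀ s : ℝ, HasDerivAt (fun s : ℝ => f (x + s • w)) (fderiv ℝ f (x + s • w) w) s := by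
    intro s
    have h1 : HasDerivAt (fun s : ℝ => x + s • w) w s := by
      simpa using ((hasDerivAt_id s).smul_const w).const_add x
    exact (hfd (x + s • w)).hasFDerivAt.comp_hasDerivAt s h1
  have hmemX : ∀ s ∈ Set.uIcc 0 t, x + s • w ∈ X := by
    intro s hs
    have hst : 0 ≤ s / t ∧ s / t ≤ 1 := by
      rcases Set.mem_uIcc.mp hs with h | h
      · have ht' : 0 < t := lt_of_le_of_ne (h.1.trans h.2) (Ne.symm ht)
        exact ⟨div_nonneg h.1 ht'.le, (div_le_one ht').mpr h.2⟩
      · have ht' : t < 0 := lt_of_le_of_ne (h.1.trans h.2) ht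
        refine ⟨div_nonneg_iff.mpr (Or.inr ⟨h.2, ht'.le⟩), ?_⟩
        rw [div_le_one_iff]
        exact Or.inr (Or.inr ⟨ht', h.1⟩)
    have hcomb : x + s • w = (1 - s / t) • x + (s / t) • (x + t • w) := by
      rw [smul_add, smul_smul, div_mul_cancel₀ s ht, sub_smul, one_smul]
      abel
    rw [hcomb]
    exact hconv hx hxt (by linarith [hst.2]) hst.1 (by ring)
  have hu : UniqueDiffOn ℝ (Set.uIcc 0 t) := uniqueDiffOn_Icc (min_lt_max.mpr (Ne.symm ht))
  have hconst := (convex_uIcc (0:ℝ) t).is_const_of_fderivWithin_eq_zero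
    (f := fun s : ℝ => f (x + s • w))
    (fun s hs => (hφd s).differentiableAt.differentiableWithinAt)
    (fun s hs => by
      have h0 : fderiv ℝ f (x + s • w) w = 0 := hX0 _ (hmemX s hs)
      have hD : HasDerivAt (fun s : ℝ => f (x + s • w)) 0 s := h0 ▸ hφd s
      have := (hD.hasFDerivAt.hasFDerivWithinAt).fderivWithin (hu s hs)
      rw [this]
      ext
      simp)
    Set.right_mem_uIcc Set.left_mem_uIcc
  simpa using hconst
end

section
/- For the partition C-eigendecomposition C = WΛW^T with W₁ spanning the active subspace (first n eigenvectors), the average squared norm of the projection of ∇f onto the inactive subspace satisfies ∫_X ‖W₂W₂^T ∇f‖² ρ dx = λ_{n+1} + ⋯ + λ_m; in particular, if λ_{n+1} = ⋯ = λ_m = 0 then W₂^T ∇f(x) = 0 for ρ-a.e. x. -/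
open MeasureTheory Matrix

/-- with `C = WΛWᵀ` and `W₂` the last `m−n` eigenvectors, the average
squared norm of the projection of `∇f` onto the inactive subspace equals
`λ_{n+1} + ⋯ + λ_m`; if those eigenvalues vanish then `W₂ᵀ ∇f = 0` for `ρ`-a.e. `x`. -/
theorem stmt17 {m : ℕ} (n : ℕ) (hn : n ≤ m)
    (X : Set (Fin m → ℝ)) (hX : IsCompact X)
    (ρ : (Fin m → ℝ) → ℝ) (hρ : ∀ x ∈ X, 0 ≤ ρ x) (hρ1 : ∫ x in X, ρ x = 1)
    (f : (Fin m → ℝ) → ℝ) (hf : ContDiff ℝ 1 f)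
    (hint : ∀ i j : Fin m,
      IntegrableOn (fun x => grad f x i * grad f x j * ρ x) X volume)
    (C : Matrix (Fin m) (Fin m) ℝ)
    (hC : ∀ i j, C i j = ∫ x in X, grad f x i * grad f x j * ρ x)
    (W : Matrix (Fin m) (Fin m) ℝ) (hW : Wᵀ * W = 1)
    (Λ : Fin m → ℝ) (hord : Antitone Λ)
    (hdecomp : C = W * Matrix.diagonal Λ * Wᵀ) :
    (∫ x in X,
        (∑ i, (∑ k ∈ Finset.univ.filter (fun k : Fin m => n ≤ (k : ℕ)),
          W i k * (∑ j, W j k * grad f x j))^2) * ρ x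
      = ∑ k ∈ Finset.univ.filter (fun k : Fin m => n ≤ (k : ℕ)), Λ k) ∧
    ((∀ k : Fin m, n ≤ (k : ℕ) → Λ k = 0) →
      ∀ᵐ x ∂((volume.restrict X).withDensity fun x => ENNReal.ofReal (ρ x)),
        ∀ k : Fin m, n ≤ (k : ℕ) → ∑ j, W j k * grad f x j = 0) := by
  classical
  set S : Finset (Fin m) := Finset.univ.filter (fun k : Fin m => n ≤ (k : ℕ)) with hS
  set g : (Fin m → ℝ) → Fin m → ℝ := grad f with hg
  set v : Fin m → (Fin m → ℝ) → ℝ := fun k x => ∑ j, W j k * g x j with hv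
  have hXm := hX.measurableSet
  -- orthonormality of columns
  have horth : ∀ k k' : Fin m, ∑ i, W i k * W i k' = if k = k' then 1 else 0 := by
    intro k k'
    have h := congrArg (fun M => M k k') hW
    simpa [Matrix.mul_apply, Matrix.transpose_apply, Matrix.one_apply] using h
  -- diagonalization identity
  have key : Wᵀ * C * W = Matrix.diagonal Λ := by
    rw [hdecomp, ← Matrix.mul_assoc, ← Matrix.mul_assoc, hW, Matrix.one_mul,
      Matrix.mul_assoc, hW, Matrix.mul_one]
  have hdiag : ∀ k : Fin m, ∑ j, ∑ j', W j k * W j' k * C j j' = Λ k := by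
    intro k
    have h := congrArg (fun M => M k k) key
    simp only [Matrix.mul_apply, Matrix.transpose_apply, Matrix.diagonal_apply_eq] at h
    rw [← h, Finset.sum_comm]
    refine Finset.sum_congr rfl fun x _ => ?_
    rw [Finset.sum_mul]
    exact Finset.sum_congr rfl fun y _ => by ring
  -- pointwise expansion of (v k)^2 * ρ
  have hexp : ∀ (k : Fin m) (x : Fin m → ℝ),
      (v k x)^2 * ρ x = ∑ j, ∑ j', W j k * W j' k * (g x j * g x j' * ρ x) := by
    intro k x
    rw [hv, sq, Finset.sum_mul_sum, Finset.sum_mul]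
    refine Finset.sum_congr rfl fun j _ => ?_
    rw [Finset.sum_mul]
    exact Finset.sum_congr rfl fun j' _ => by ring
  have hintk : ∀ k : Fin m, Integrable (fun x => (v k x)^2 * ρ x) (volume.restrict X) := by
    intro k
    have heq : (fun x => (v k x)^2 * ρ x)
        = fun x => ∑ j, ∑ j', W j k * W j' k * (g x j * g x j' * ρ x) := funext (hexp k)
    rw [heq]
    refine integrable_finset_sum _ fun j _ => integrable_finset_sum _ fun j' _ => ?_
    exact (hint j j').const_mul _
  have hCk : ∀ k : Fin m, ∫ x in X, (v k x)^2 * ρ x = Λ k := by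
    intro k
    calc ∫ x in X, (v k x)^2 * ρ x
        = ∫ x in X, ∑ j, ∑ j', W j k * W j' k * (g x j * g x j' * ρ x) := by
          exact integral_congr_ae (Filter.Eventually.of_forall fun x => hexp k x)
      _ = ∑ j, ∑ j', W j k * W j' k * ∫ x in X, g x j * g x j' * ρ x := by
          rw [integral_finset_sum _ (fun j _ =>
            integrable_finset_sum _ fun j' _ => (hint j j').const_mul _)]
          refine Finset.sum_congr rfl fun j _ => ?_
          rw [integral_finset_sum _ (fun j' _ => (hint j j').const_mul _)]
          exact Finset.sum_congr rfl fun j' _ => integral_const_mul _ _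
      _ = ∑ j, ∑ j', W j k * W j' k * C j j' := by simp only [← hC]
      _ = Λ k := hdiag k
  -- pointwise contraction using orthonormality
  have key1 : ∀ (x : Fin m → ℝ) (i : Fin m), (∑ k ∈ S, W i k * v k x)^2
      = ∑ k ∈ S, ∑ k' ∈ S, v k x * v k' x * (W i k * W i k') := by
    intro x i
    rw [sq, Finset.sum_mul_sum]
    exact Finset.sum_congr rfl fun k _ => Finset.sum_congr rfl fun k' _ => by ring
  have key2 : ∀ x : Fin m → ℝ, ∑ i, (∑ k ∈ S, W i k * v k x)^2 = ∑ k ∈ S, (v k x)^2 := by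
    intro x
    simp only [key1]
    rw [Finset.sum_comm]
    refine Finset.sum_congr rfl fun k hk => ?_
    rw [Finset.sum_comm]
    calc ∑ k' ∈ S, ∑ i, v k x * v k' x * (W i k * W i k')
        = ∑ k' ∈ S, v k x * v k' x * ∑ i, W i k * W i k' := by
          exact Finset.sum_congr rfl fun k' _ => (Finset.mul_sum _ _ _).symm
      _ = ∑ k' ∈ S, (if k = k' then v k x * v k' x else 0) := by
          refine Finset.sum_congr rfl fun k' _ => ?_
          rw [horth k k']
          by_cases h : k = k' <;> simp [h]
      _ = (v k x)^2 := by
          rw [Finset.sum_ite_eq S k (fun k' => v k x * v k' x)]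
          simp [hk, sq]
  have h1 : ∫ x in X, (∑ i, (∑ k ∈ S, W i k * v k x)^2) * ρ x = ∑ k ∈ S, Λ k := by
    calc ∫ x in X, (∑ i, (∑ k ∈ S, W i k * v k x)^2) * ρ x
        = ∫ x in X, ∑ k ∈ S, (v k x)^2 * ρ x := by
          refine integral_congr_ae (Filter.Eventually.of_forall fun x => ?_)
          dsimp only
          rw [key2 x, Finset.sum_mul]
      _ = ∑ k ∈ S, ∫ x in X, (v k x)^2 * ρ x := integral_finset_sum _ fun k _ => hintk k
      _ = ∑ k ∈ S, Λ k := Finset.sum_congr rfl fun k _ => hCk k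
  refine ⟨h1, ?_⟩
  intro hΛ
  -- measurability facts
  have hgc : ∀ j : Fin m, Continuous fun x => g x j := fun j =>
    (hf.continuous_fderiv one_ne_zero).clm_apply continuous_const
  have hvc : ∀ k : Fin m, Continuous (v k) := fun k =>
    continuous_finset_sum _ fun j _ => continuous_const.mul (hgc j)
  have hNm : MeasurableSet {x : Fin m → ℝ | ¬ ∀ k : Fin m, n ≤ (k : ℕ) → v k x = 0} := by
    have hPm : MeasurableSet {x : Fin m → ℝ | ∀ k : Fin m, n ≤ (k : ℕ) → v k x = 0} := by
      have hset : {x : Fin m → ℝ | ∀ k : Fin m, n ≤ (k : ℕ) → v k x = 0}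
          = ⋂ k : Fin m, {x | n ≤ (k : ℕ) → v k x = 0} := by
        ext x; simp
      rw [hset]
      refine MeasurableSet.iInter fun k => ?_
      by_cases hk : n ≤ (k : ℕ)
      · have : {x : Fin m → ℝ | n ≤ (k : ℕ) → v k x = 0} = {x | v k x = 0} := by
          ext x; simp [hk]
        rw [this]
        exact measurableSet_eq_fun (hvc k).measurable measurable_const
      · have : {x : Fin m → ℝ | n ≤ (k : ℕ) → v k x = 0} = Set.univ := by
          ext x; simp [hk]
        rw [this]; exact MeasurableSet.univ
    exact hPm.compl
  -- each inactive eigen-direction has zero integral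
  have hzero : ∀ k : Fin m, n ≤ (k : ℕ) →
      (fun x => (v k x)^2 * ρ x) =ᵐ[volume.restrict X] 0 := by
    intro k hk
    have hnn : 0 ≤ᵐ[volume.restrict X] fun x => (v k x)^2 * ρ x := by
      refine (ae_restrict_iff' hXm).2 (Filter.Eventually.of_forall fun x hx => ?_)
      exact mul_nonneg (sq_nonneg _) (hρ x hx)
    refine (integral_eq_zero_iff_of_nonneg_ae hnn (hintk k)).1 ?_
    rw [hCk k]
    exact hΛ k hk
  have hae2 : ∀ᵐ x ∂(volume.restrict X), ∀ k : Fin m, n ≤ (k : ℕ) → (v k x)^2 * ρ x = 0 := by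
    rw [ae_all_iff]
    intro k
    by_cases hk : n ≤ (k : ℕ)
    · filter_upwards [hzero k hk] with x hx
      exact fun _ => hx
    · filter_upwards with x
      exact fun h => absurd h hk
  rw [ae_iff, withDensity_apply _ hNm, ← lintegral_indicator hNm _]
  have hind : (fun x => Set.indicator {x : Fin m → ℝ | ¬ ∀ k : Fin m, n ≤ (k : ℕ) → v k x = 0}
      (fun x => ENNReal.ofReal (ρ x)) x) =ᵐ[volume.restrict X] 0 := by
    filter_upwards [hae2] with x hx2
    by_cases hxN : x ∈ {x : Fin m → ℝ | ¬ ∀ k : Fin m, n ≤ (k : ℕ) → v k x = 0}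
    · rw [Set.indicator_of_mem hxN]
      simp only [Set.mem_setOf_eq, not_forall] at hxN
      obtain ⟨k, hk, hvk⟩ := hxN
      have h0 := hx2 k hk
      have hρ0 : ρ x = 0 := by
        rcases mul_eq_zero.1 h0 with h | h
        · exact absurd (by exact pow_eq_zero_iff (by norm_num) |>.1 h) hvk
        · exact h
      simp [hρ0]
    · rw [Set.indicator_of_notMem hxN]
      rfl
  rw [lintegral_congr_ae hind]
  simp
end

section
/- If f(x) = g(w₁^T x) + h(x) where the perturbation h satisfies ∫_X ‖∇h‖² ρ dx ≤ ε, then the eigenvalues λ₂, …, λ_m of C = ∫ (∇f)(∇f)^T ρ dx orthogonal to w₁ satisfy λ₂ + ⋯ + λ_m ≤ ∫_X ‖(I − w₁w₁^T)∇f‖² ρ dx = ∫_X ‖(I − w₁w₁^T)∇h‖² ρ dx ≤ ε. -/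
open MeasureTheory Matrix

lemma lemB {m : ℕ} (w v : Fin m → ℝ) (hw : ∑ i, (w i)^2 = 1) :
    ∑ i, (v i - (∑ j, w j * v j) * w i)^2
      = (∑ i, (v i)^2) - (∑ j, w j * v j)^2 := by
  set c := ∑ j, w j * v j with hc
  have : ∀ i, (v i - c * w i)^2 = (v i)^2 - 2*c*(w i * v i) + c^2 * (w i)^2 := by
    intro i; ring
  simp only [this]
  rw [Finset.sum_add_distrib, Finset.sum_sub_distrib, ← Finset.mul_sum, ← Finset.mul_sum,
    ← hc, hw]
  ring

lemma lemA {m : ℕ} (w₁ : Fin m → ℝ) (g : ℝ → ℝ) (hg : ContDiff ℝ 1 g)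
    (h : (Fin m → ℝ) → ℝ) (hh : ContDiff ℝ 1 h)
    (f : (Fin m → ℝ) → ℝ) (hfdef : ∀ x, f x = g (∑ i, w₁ i * x i) + h x)
    (x : Fin m → ℝ) (i : Fin m) :
    grad f x i = deriv g (∑ j, w₁ j * x j) * w₁ i + grad h x i := by
  set L : (Fin m → ℝ) →L[ℝ] ℝ :=
    ∑ j, w₁ j • (ContinuousLinearMap.proj j : (Fin m → ℝ) →L[ℝ] ℝ) with hLdef
  have hLapp : ∀ y, L y = ∑ j, w₁ j * y j := by
    intro y; simp [hLdef, ContinuousLinearMap.sum_apply]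
  have hL : HasFDerivAt (fun y : Fin m → ℝ => ∑ j, w₁ j * y j) L x := by
    have := L.hasFDerivAt (x := x)
    convert this using 1
    funext y; rw [hLapp]
  have hg' : HasDerivAt g (deriv g (∑ j, w₁ j * x j)) (∑ j, w₁ j * x j) :=
    (hg.differentiable one_ne_zero _).hasDerivAt
  have hcomp := hg'.comp_hasFDerivAt x hL
  have hhx := (hh.differentiable one_ne_zero x).hasFDerivAt
  have hf : HasFDerivAt f ((deriv g (∑ j, w₁ j * x j)) • L + fderiv ℝ h x) x := by
    have : f = fun y => (g ∘ fun y : Fin m → ℝ => ∑ j, w₁ j * y j) y + h y := by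
      funext y; simp [hfdef y, Function.comp]
    rw [this]
    exact hcomp.add hhx
  have hgrad : grad f x i = ((deriv g (∑ j, w₁ j * x j)) • L + fderiv ℝ h x) (Pi.single i 1) := by
    rw [grad, hf.fderiv]
  rw [hgrad]
  simp only [ContinuousLinearMap.add_apply, ContinuousLinearMap.smul_apply, smul_eq_mul]
  have : L (Pi.single i 1) = w₁ i := by
    rw [hLapp]
    simp [Pi.single_apply, mul_ite, Finset.sum_ite_eq]
  rw [this]; rfl


/-- if `f = g(w₁ᵀ·) + h` with `∫_X ‖∇h‖² ρ dx ≤ ε`, then the trailing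
eigenvalues of `C` satisfy
`λ₂ + ⋯ + λ_m ≤ ∫_X ‖(I − w₁w₁ᵀ)∇f‖² ρ dx = ∫_X ‖(I − w₁w₁ᵀ)∇h‖² ρ dx ≤ ε`. -/
theorem stmt19 {m : ℕ} (hm : 0 < m)
    (X : Set (Fin m → ℝ)) (hX : IsCompact X)
    (ρ : (Fin m → ℝ) → ℝ) (hρ : ∀ x ∈ X, 0 ≤ ρ x) (hρ1 : ∫ x in X, ρ x = 1)
    (w₁ : Fin m → ℝ) (hw₁ : ∑ i, (w₁ i)^2 = 1)
    (g : ℝ → ℝ) (hg : ContDiff ℝ 1 g)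
    (h : (Fin m → ℝ) → ℝ) (hh : ContDiff ℝ 1 h)
    (f : (Fin m → ℝ) → ℝ) (hfdef : ∀ x, f x = g (∑ i, w₁ i * x i) + h x)
    (ε : ℝ)
    (hhε : ∫ x in X, (∑ i, (grad h x i)^2) * ρ x ≤ ε)
    (hintf : ∀ i j : Fin m,
      IntegrableOn (fun x => grad f x i * grad f x j * ρ x) X volume)
    (hinth : ∀ i j : Fin m,
      IntegrableOn (fun x => grad h x i * grad h x j * ρ x) X volume)
    (C : Matrix (Fin m) (Fin m) ℝ)
    (hC : ∀ i j, C i j = ∫ x in X, grad f x i * grad f x j * ρ x)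
    (W : Matrix (Fin m) (Fin m) ℝ) (hW : Wᵀ * W = 1)
    (Λ : Fin m → ℝ) (hord : Antitone Λ)
    (hdecomp : C = W * Matrix.diagonal Λ * Wᵀ) :
    (∑ k ∈ Finset.univ.filter (fun k : Fin m => 1 ≤ (k : ℕ)), Λ k)
      ≤ (∫ x in X, (∑ i,
          (grad f x i - (∑ j, w₁ j * grad f x j) * w₁ i)^2) * ρ x) ∧
    (∫ x in X, (∑ i, (grad f x i - (∑ j, w₁ j * grad f x j) * w₁ i)^2) * ρ x)
      = (∫ x in X, (∑ i, (grad h x i - (∑ j, w₁ j * grad h x j) * w₁ i)^2) * ρ x) ∧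
    (∫ x in X, (∑ i, (grad h x i - (∑ j, w₁ j * grad h x j) * w₁ i)^2) * ρ x) ≤ ε := by
  have hgf : ∀ x i, grad f x i = deriv g (∑ j, w₁ j * x j) * w₁ i + grad h x i :=
    lemA w₁ g hg h hh f hfdef
  -- pointwise projection equality
  have hproj : ∀ x i, grad f x i - (∑ j, w₁ j * grad f x j) * w₁ i
      = grad h x i - (∑ j, w₁ j * grad h x j) * w₁ i := by
    intro x i
    have hc : ∑ j, w₁ j * grad f x j
        = deriv g (∑ j, w₁ j * x j) + ∑ j, w₁ j * grad h x j := by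
      have e1 : ∀ j, w₁ j * grad f x j
          = deriv g (∑ j, w₁ j * x j) * (w₁ j)^2 + w₁ j * grad h x j := by
        intro j; rw [hgf x j]; ring
      simp only [e1]
      rw [Finset.sum_add_distrib, ← Finset.mul_sum, hw₁, mul_one]
    rw [hgf x i, hc]; ring
  have hsumeq : ∀ x, ∑ i, (grad f x i - (∑ j, w₁ j * grad f x j) * w₁ i)^2
      = ∑ i, (grad h x i - (∑ j, w₁ j * grad h x j) * w₁ i)^2 := by
    intro x; exact Finset.sum_congr rfl fun i _ => by rw [hproj x i]
  -- integrability helpers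
  have expand2 : ∀ (u : (Fin m → ℝ) → Fin m → ℝ) (x : Fin m → ℝ),
      (∑ i, (u x i)^2) * ρ x = ∑ i, u x i * u x i * ρ x := by
    intro u x; rw [Finset.sum_mul]; exact Finset.sum_congr rfl fun i _ => by ring
  have expandc : ∀ (u : (Fin m → ℝ) → Fin m → ℝ) (x : Fin m → ℝ),
      (∑ j, w₁ j * u x j)^2 * ρ x
        = ∑ i, ∑ j, w₁ i * w₁ j * (u x i * u x j * ρ x) := by
    intro u x
    rw [sq, Finset.sum_mul_sum, Finset.sum_mul]
    refine Finset.sum_congr rfl fun i _ => ?_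
    rw [Finset.sum_mul]
    exact Finset.sum_congr rfl fun j _ => by ring
  have intf2 : IntegrableOn (fun x => (∑ i, (grad f x i)^2) * ρ x) X volume := by
    simp only [expand2]
    exact integrable_finset_sum _ fun i _ => hintf i i
  have inth2 : IntegrableOn (fun x => (∑ i, (grad h x i)^2) * ρ x) X volume := by
    simp only [expand2]
    exact integrable_finset_sum _ fun i _ => hinth i i
  have intcf : IntegrableOn (fun x => (∑ j, w₁ j * grad f x j)^2 * ρ x) X volume := by
    simp only [expandc]
    exact integrable_finset_sum _ fun i _ =>
      integrable_finset_sum _ fun j _ => (hintf i j).const_mul _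
  have intch : IntegrableOn (fun x => (∑ j, w₁ j * grad h x j)^2 * ρ x) X volume := by
    simp only [expandc]
    exact integrable_finset_sum _ fun i _ =>
      integrable_finset_sum _ fun j _ => (hinth i j).const_mul _
  -- key pointwise identities via lemB
  have keyf : ∀ x, (∑ i, (grad f x i - (∑ j, w₁ j * grad f x j) * w₁ i)^2) * ρ x
      = (∑ i, (grad f x i)^2) * ρ x - (∑ j, w₁ j * grad f x j)^2 * ρ x := by
    intro x; rw [lemB w₁ (grad f x) hw₁]; ring
  have keyh : ∀ x, (∑ i, (grad h x i - (∑ j, w₁ j * grad h x j) * w₁ i)^2) * ρ x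
      = (∑ i, (grad h x i)^2) * ρ x - (∑ j, w₁ j * grad h x j)^2 * ρ x := by
    intro x; rw [lemB w₁ (grad h x) hw₁]; ring
  have hcfnn : (0:ℝ) ≤ ∫ x in X, (∑ j, w₁ j * grad f x j)^2 * ρ x :=
    setIntegral_nonneg hX.measurableSet fun x hx => mul_nonneg (sq_nonneg _) (hρ x hx)
  have hchnn : (0:ℝ) ≤ ∫ x in X, (∑ j, w₁ j * grad h x j)^2 * ρ x :=
    setIntegral_nonneg hX.measurableSet fun x hx => mul_nonneg (sq_nonneg _) (hρ x hx)
  -- split integrals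
  have splitf : (∫ x in X, (∑ i, (grad f x i - (∑ j, w₁ j * grad f x j) * w₁ i)^2) * ρ x)
      = (∫ x in X, (∑ i, (grad f x i)^2) * ρ x)
        - ∫ x in X, (∑ j, w₁ j * grad f x j)^2 * ρ x := by
    simp only [keyf]
    exact integral_sub intf2 intcf
  have splith : (∫ x in X, (∑ i, (grad h x i - (∑ j, w₁ j * grad h x j) * w₁ i)^2) * ρ x)
      = (∫ x in X, (∑ i, (grad h x i)^2) * ρ x)
        - ∫ x in X, (∑ j, w₁ j * grad h x j)^2 * ρ x := by
    simp only [keyh]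
    exact integral_sub inth2 intch
  refine ⟨?_, ?_, ?_⟩
  · -- Part 1
    set z : Fin m := ⟨0, hm⟩ with hz
    have hfilter : Finset.univ.filter (fun k : Fin m => 1 ≤ (k : ℕ))
        = Finset.univ.erase z := by
      ext k
      simp only [Finset.mem_filter, Finset.mem_univ, true_and, Finset.mem_erase, and_true]
      constructor
      · intro hk hkz; rw [hkz] at hk; simp [hz] at hk
      · intro hk
        rcases Nat.eq_zero_or_pos (k : ℕ) with h0 | h1
        · exact absurd (Fin.ext h0) hk
        · exact h1
    have hsum : ∑ k ∈ Finset.univ.erase z, Λ k = (∑ k, Λ k) - Λ z := by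
      rw [← Finset.add_sum_erase _ _ (Finset.mem_univ z)]; ring
    have htr : C.trace = ∑ k, Λ k := by
      rw [hdecomp, Matrix.trace_mul_cycle, hW, Matrix.one_mul, Matrix.trace_diagonal]
    have htr2 : C.trace = ∫ x in X, (∑ i, (grad f x i)^2) * ρ x := by
      simp only [expand2]
      rw [integral_finset_sum _ fun i _ => hintf i i]
      simp only [Matrix.trace, Matrix.diag]
      exact Finset.sum_congr rfl fun i _ => hC i i
    -- Rayleigh quotient
    set v : Fin m → ℝ := Wᵀ *ᵥ w₁ with hv
    have hWWt : W * Wᵀ = 1 := mul_eq_one_comm.mp hW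
    have hq1 : w₁ ⬝ᵥ C *ᵥ w₁ = ∑ k, Λ k * (v k)^2 := by
      rw [hdecomp, ← Matrix.mulVec_mulVec, ← Matrix.mulVec_mulVec,
        Matrix.dotProduct_mulVec, ← Matrix.mulVec_transpose]
      simp only [← hv, dotProduct, Matrix.mulVec_diagonal]
      exact Finset.sum_congr rfl fun k _ => by ring
    have hvnorm : ∑ k, (v k)^2 = 1 := by
      have : ∑ k, (v k)^2 = v ⬝ᵥ v := by
        simp [dotProduct, sq]
      rw [this, hv]
      nth_rewrite 1 [Matrix.mulVec_transpose]
      rw [← Matrix.dotProduct_mulVec, Matrix.mulVec_mulVec, hWWt, Matrix.one_mulVec]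
      simpa [dotProduct, sq] using hw₁
    have hq2 : w₁ ⬝ᵥ C *ᵥ w₁ ≤ Λ z := by
      rw [hq1]
      calc ∑ k, Λ k * (v k)^2 ≤ ∑ k, Λ z * (v k)^2 := by
            refine Finset.sum_le_sum fun k _ => ?_
            exact mul_le_mul_of_nonneg_right (hord (by simp [hz, Fin.le_def])) (sq_nonneg _)
        _ = Λ z := by rw [← Finset.mul_sum, hvnorm, mul_one]
    have hq3 : w₁ ⬝ᵥ C *ᵥ w₁ = ∫ x in X, (∑ j, w₁ j * grad f x j)^2 * ρ x := by
      simp only [expandc]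
      rw [integral_finset_sum _ fun i _ =>
        integrable_finset_sum _ fun j _ => (hintf i j).const_mul _]
      have : ∀ i : Fin m, (∫ x in X, ∑ j, w₁ i * w₁ j * (grad f x i * grad f x j * ρ x))
          = ∑ j, w₁ i * w₁ j * C i j := by
        intro i
        rw [integral_finset_sum _ fun j _ => (hintf i j).const_mul _]
        exact Finset.sum_congr rfl fun j _ => by
          rw [MeasureTheory.integral_const_mul, hC]
      simp only [this]
      simp only [dotProduct, Matrix.mulVec, dotProduct, Finset.mul_sum]
      exact Finset.sum_congr rfl fun i _ => Finset.sum_congr rfl fun j _ => by ring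
    rw [hfilter, hsum, splitf, ← htr2]
    have := htr ▸ (le_refl C.trace)
    linarith [hq2, hq3 ▸ hq2]
  · -- Part 2
    simp only [hsumeq]
  · -- Part 3
    rw [splith]
    linarith
end
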